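/- Let G be the connection gadget. Every TC-compatible orientation of G has either both arcs (s,u) and (v,t), or both arcs (u,s) and (t,v). -/

import Mathlib

/-!
Common definitions: rooted (pseudo/phylogenetic) networks represented as arc
relations `D : V → V → Prop` on a vertex type `V`, with in/out-degrees measured
by `Set.ncard`, together with the orientation notions (Variant A, Variant B,
orientations of connector networks) from the paper.
-/

section Prelude

universe u
variable {V : Type u}

/-- In-degree of `v` in the digraph with arc relation `D`. -/
noncomputable def inDeg (D : V → V → Prop) (v : V) : ℕ := Set.ncard {u | D u v}

/-- Out-degree of `v` in the digraph with arc relation `D`. -/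
noncomputable def outDeg (D : V → V → Prop) (v : V) : ℕ := Set.ncard {u | D v u}

/-- A digraph is acyclic if it has no directed cycle. -/
def Acyclic (D : V → V → Prop) : Prop := ∀ v, ¬ Relation.TransGen D v v

/-- A tree vertex: in-degree 1 and out-degree at least 1. -/
def IsTreeVertex (D : V → V → Prop) (v : V) : Prop := inDeg D v = 1 ∧ 1 ≤ outDeg D v

/-- A leaf (sink) of a digraph. -/
def IsLeafVertex (D : V → V → Prop) (v : V) : Prop := outDeg D v = 0

/-- Tree-child: every non-leaf vertex has a child that is a tree vertex or a leaf. -/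
def TreeChild (D : V → V → Prop) : Prop :=
  ∀ v, ¬ IsLeafVertex D v → ∃ u, D v u ∧ (IsTreeVertex D u ∨ IsLeafVertex D u)

/-- Funneled: every reticulation (in-degree at least 2) has out-degree 1. -/
def Funneled (D : V → V → Prop) : Prop := ∀ v, 2 ≤ inDeg D v → outDeg D v = 1

/-- An arc `(a,b)` is a shortcut if there is another directed path from `a` to `b`. -/
def IsShortcut (D : V → V → Prop) (a b : V) : Prop :=
  D a b ∧ ∃ c, D a c ∧ Relation.TransGen D c b

/-- Normal: tree-child and without shortcuts. -/
def NormalNet (D : V → V → Prop) : Prop := TreeChild D ∧ ∀ a b, ¬ IsShortcut D a b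

/-- `D` is a rooted pseudo network with root `ρ` whose set of leaves is `X`
(leaves are labelled by themselves). -/
def IsRootedPseudoNetwork (D : V → V → Prop) (ρ : V) (X : Set V) : Prop :=
  Acyclic D ∧ (∀ v, ¬ D v v) ∧
  inDeg D ρ = 0 ∧ 1 ≤ outDeg D ρ ∧
  (∀ v, inDeg D v = 0 → v = ρ) ∧
  (∀ v, outDeg D v = 0 → inDeg D v = 1) ∧
  {v | outDeg D v = 0} = X ∧
  (∀ v, v ≠ ρ → outDeg D v ≠ 0 → 1 ≤ inDeg D v ∧ 1 ≤ outDeg D v)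

/-- `D` is a rooted phylogenetic network with root `ρ` and leaf set `X`:
additionally every internal vertex has in-degree 1 and out-degree ≥ 2, or
in-degree ≥ 2 and out-degree ≥ 1. -/
def IsRootedPhyloNetwork (D : V → V → Prop) (ρ : V) (X : Set V) : Prop :=
  Acyclic D ∧ (∀ v, ¬ D v v) ∧
  inDeg D ρ = 0 ∧ 1 ≤ outDeg D ρ ∧
  (∀ v, inDeg D v = 0 → v = ρ) ∧
  (∀ v, outDeg D v = 0 → inDeg D v = 1) ∧
  {v | outDeg D v = 0} = X ∧
  (∀ v, v ≠ ρ → outDeg D v ≠ 0 →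
    (inDeg D v = 1 ∧ 2 ≤ outDeg D v) ∨ (2 ≤ inDeg D v ∧ 1 ≤ outDeg D v))

/-- `{u,w} = {a,b}` as unordered pairs. -/
def SamePair (u w a b : V) : Prop := (u = a ∧ w = b) ∨ (u = b ∧ w = a)

/-- A Variant-A orientation of the undirected graph `adj` obtained by
subdividing the edge `{a,b}` with a new root vertex `none` and directing all
edges; `D` is the resulting arc relation on `Option V` (the root is `none`). -/
def VariantA (adj : V → V → Prop) (a b : V) (D : Option V → Option V → Prop) : Prop :=
  adj a b ∧
  D none (some a) ∧ D none (some b) ∧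
  (∀ o, ¬ D o none) ∧
  (∀ u, D none (some u) → u = a ∨ u = b) ∧
  (∀ u w : V, D (some u) (some w) → adj u w ∧ ¬ SamePair u w a b) ∧
  (∀ u w : V, adj u w → ¬ SamePair u w a b → (D (some u) (some w) ↔ ¬ D (some w) (some u)))

/-- `D` assigns to each edge of `adj` exactly one direction (used for
Variant-B orientations and for orientations of connector networks). -/
def IsOrientation (adj D : V → V → Prop) : Prop :=
  (∀ a b, D a b → adj a b) ∧ (∀ a b, adj a b → (D a b ↔ ¬ D b a))

/-- An orientation of a connector network with labelled leaves `L` and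
connector leaves `Uc` that is acyclic, in which every labelled leaf has
out-degree 0 and every vertex not in `L ∪ Uc` has in-degree ≥ 1 and
out-degree ≥ 1 (the standing hypotheses for the compatibility notions). -/
def GoodOrientation (adj D : V → V → Prop) (L Uc : Set V) : Prop :=
  IsOrientation adj D ∧ Acyclic D ∧ (∀ v ∈ L, outDeg D v = 0) ∧
  (∀ v, v ∉ L ∪ Uc → 1 ≤ inDeg D v ∧ 1 ≤ outDeg D v)

/-- F-compatible: every vertex of in-degree at least 2 has out-degree 1. -/
def FCompatible (D : V → V → Prop) : Prop := ∀ v, 2 ≤ inDeg D v → outDeg D v = 1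

/-- TC-compatible orientation of a connector network. -/
def TCCompatible (D : V → V → Prop) (L Uc : Set V) : Prop :=
  ∀ v, v ∉ L ∪ Uc → ∃ u, D v u ∧ (u ∈ L ∪ Uc ∨ (inDeg D u = 1 ∧ 1 ≤ outDeg D u))

/-- Strongly TC-compatible orientation of a connector network. -/
def StrongTCCompatible (D : V → V → Prop) (L Uc : Set V) : Prop :=
  ∀ v, v ∉ L ∪ Uc → ∃ u, D v u ∧ (u ∈ L ∨ (inDeg D u = 1 ∧ 1 ≤ outDeg D u))

end Prelude

namespace PaperFormalization

/-- Vertices of the connection gadget: connector leaves `s,t`, internal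
vertices `u,v,w,w'`, and labelled leaves `lf, lf'`. -/
inductive CGV : Type
  | s | t | u | v | w | w' | lf | lf'

/-- The edges of the connection gadget (one fixed orientation of each edge). -/
def cgBase : CGV → CGV → Prop
  | .s, .u => True
  | .t, .v => True
  | .u, .v => True
  | .u, .w => True
  | .v, .w' => True
  | .w, .w' => True
  | .w, .lf => True
  | .w', .lf' => True
  | _, _ => False

/-- Adjacency relation of the connection gadget. -/
def cgAdj (a b : CGV) : Prop := cgBase a b ∨ cgBase b a

/-- Labelled leaves of the connection gadget. -/
def cgL : Set CGV := {CGV.lf, CGV.lf'}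

/-- Connector (unlabelled) leaves of the connection gadget. -/
def cgU : Set CGV := {CGV.s, CGV.t}

end PaperFormalization

namespace PaperFormalization


deriving instance DecidableEq for CGV

instance : Fintype CGV :=
  ⟨⟨↑[CGV.s, CGV.t, CGV.u, CGV.v, CGV.w, CGV.w', CGV.lf, CGV.lf'], by decide⟩,
    fun x => by cases x <;> decide⟩

/-- Concrete boolean orientation of the connection gadget determined by 8 booleans. -/
def mkD (b1 b2 b3 b4 b5 b6 b7 b8 : Bool) : CGV → CGV → Bool
  | .s, .u => b1
  | .u, .s => !b1
  | .t, .v => b2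
  | .v, .t => !b2
  | .u, .v => b3
  | .v, .u => !b3
  | .u, .w => b4
  | .w, .u => !b4
  | .v, .w' => b5
  | .w', .v => !b5
  | .w, .w' => b6
  | .w', .w => !b6
  | .w, .lf => b7
  | .lf, .w => !b7
  | .w', .lf' => b8
  | .lf', .w' => !b8
  | _, _ => false

def fIn (f : CGV → CGV → Bool) (v : CGV) : ℕ :=
  (Finset.univ.filter fun x => f x v = true).card

def fOut (f : CGV → CGV → Bool) (v : CGV) : ℕ :=
  (Finset.univ.filter fun x => f v x = true).card

lemma key : ∀ b1 b2 b3 b4 b5 b6 b7 b8 : Bool,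
    fOut (mkD b1 b2 b3 b4 b5 b6 b7 b8) CGV.lf = 0 →
    fOut (mkD b1 b2 b3 b4 b5 b6 b7 b8) CGV.lf' = 0 →
    (∀ x : CGV, (x = CGV.u ∨ x = CGV.v ∨ x = CGV.w ∨ x = CGV.w') →
      1 ≤ fIn (mkD b1 b2 b3 b4 b5 b6 b7 b8) x ∧ 1 ≤ fOut (mkD b1 b2 b3 b4 b5 b6 b7 b8) x) →
    ¬(mkD b1 b2 b3 b4 b5 b6 b7 b8 CGV.u CGV.v = true ∧
      mkD b1 b2 b3 b4 b5 b6 b7 b8 CGV.v CGV.w' = true ∧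
      mkD b1 b2 b3 b4 b5 b6 b7 b8 CGV.w' CGV.w = true ∧
      mkD b1 b2 b3 b4 b5 b6 b7 b8 CGV.w CGV.u = true) →
    ¬(mkD b1 b2 b3 b4 b5 b6 b7 b8 CGV.v CGV.u = true ∧
      mkD b1 b2 b3 b4 b5 b6 b7 b8 CGV.u CGV.w = true ∧
      mkD b1 b2 b3 b4 b5 b6 b7 b8 CGV.w CGV.w' = true ∧
      mkD b1 b2 b3 b4 b5 b6 b7 b8 CGV.w' CGV.v = true) →
    (∀ x : CGV, (x = CGV.u ∨ x = CGV.v ∨ x = CGV.w ∨ x = CGV.w') →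
      ∃ y : CGV, mkD b1 b2 b3 b4 b5 b6 b7 b8 x y = true ∧
        ((y = CGV.s ∨ y = CGV.t ∨ y = CGV.lf ∨ y = CGV.lf') ∨
          (fIn (mkD b1 b2 b3 b4 b5 b6 b7 b8) y = 1 ∧
            1 ≤ fOut (mkD b1 b2 b3 b4 b5 b6 b7 b8) y))) →
    ((mkD b1 b2 b3 b4 b5 b6 b7 b8 CGV.s CGV.u = true ∧
      mkD b1 b2 b3 b4 b5 b6 b7 b8 CGV.v CGV.t = true) ∨
     (mkD b1 b2 b3 b4 b5 b6 b7 b8 CGV.u CGV.s = true ∧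
      mkD b1 b2 b3 b4 b5 b6 b7 b8 CGV.t CGV.v = true)) := by
  set_option maxHeartbeats 2000000 in
  set_option synthInstance.maxHeartbeats 400000 in
  set_option synthInstance.maxSize 2048 in
  decide

/-- Lemma `connection_gadget`(iii): every TC-compatible
orientation of the connection gadget has either both arcs `(s,u)` and `(v,t)`,
or both arcs `(u,s)` and `(t,v)`. -/
theorem connection_gadget_TC_orientations_dichotomy :
    ∀ D : CGV → CGV → Prop,
      GoodOrientation cgAdj D cgL cgU →
      TCCompatible D cgL cgU →
      (D CGV.s CGV.u ∧ D CGV.v CGV.t) ∨ (D CGV.u CGV.s ∧ D CGV.t CGV.v) := by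
  classical
  intro D hgood htc
  obtain ⟨⟨hor1, hor2⟩, hacyc, hleaf, hdeg⟩ := hgood
  set f := mkD (decide (D .s .u)) (decide (D .t .v)) (decide (D .u .v))
      (decide (D .u .w)) (decide (D .v .w')) (decide (D .w .w'))
      (decide (D .w .lf)) (decide (D .w' .lf')) with hf
  have hD : ∀ a c, D a c ↔ f a c = true := by
    intro a c
    cases a <;> cases c <;>
      simp only [hf, mkD, Bool.not_eq_true', decide_eq_true_eq, decide_eq_false_iff_not] <;>
      first
        | exact Iff.rfl
        | exact hor2 _ _ (Or.inr trivial)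
        | exact iff_of_false (fun h => by simpa [cgAdj, cgBase] using hor1 _ _ h)
            (by simp)
  have hIn : ∀ x, inDeg D x = fIn f x := by
    intro x
    have hs : {y | D y x} = ↑(Finset.univ.filter fun y => f y x = true) := by
      ext y; simp [hD]
    rw [inDeg, hs, Set.ncard_coe_finset, fIn]
  have hOut : ∀ x, outDeg D x = fOut f x := by
    intro x
    have hs : {y | D x y} = ↑(Finset.univ.filter fun y => f x y = true) := by
      ext y; simp [hD]
    rw [outDeg, hs, Set.ncard_coe_finset, fOut]
  have hnotin : ∀ x : CGV, (x = CGV.u ∨ x = CGV.v ∨ x = CGV.w ∨ x = CGV.w') →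
      x ∉ cgL ∪ cgU := by
    rintro x (rfl | rfl | rfl | rfl) <;> simp [cgL, cgU]
  have h1 : fOut f CGV.lf = 0 := by rw [← hOut]; exact hleaf _ (by simp [cgL])
  have h2 : fOut f CGV.lf' = 0 := by rw [← hOut]; exact hleaf _ (by simp [cgL])
  have h3 : ∀ x : CGV, (x = CGV.u ∨ x = CGV.v ∨ x = CGV.w ∨ x = CGV.w') →
      1 ≤ fIn f x ∧ 1 ≤ fOut f x := by
    intro x hx
    rw [← hIn, ← hOut]
    exact hdeg x (hnotin x hx)
  have h4 : ¬(f CGV.u CGV.v = true ∧ f CGV.v CGV.w' = true ∧ f CGV.w' CGV.w = true ∧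
      f CGV.w CGV.u = true) := by
    rintro ⟨a1, a2, a3, a4⟩
    exact hacyc CGV.u (Relation.TransGen.head ((hD _ _).2 a1)
      (Relation.TransGen.head ((hD _ _).2 a2)
        (Relation.TransGen.head ((hD _ _).2 a3) (Relation.TransGen.single ((hD _ _).2 a4)))))
  have h5 : ¬(f CGV.v CGV.u = true ∧ f CGV.u CGV.w = true ∧ f CGV.w CGV.w' = true ∧
      f CGV.w' CGV.v = true) := by
    rintro ⟨a1, a2, a3, a4⟩
    exact hacyc CGV.v (Relation.TransGen.head ((hD _ _).2 a1)
      (Relation.TransGen.head ((hD _ _).2 a2)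
        (Relation.TransGen.head ((hD _ _).2 a3) (Relation.TransGen.single ((hD _ _).2 a4)))))
  have h6 : ∀ x : CGV, (x = CGV.u ∨ x = CGV.v ∨ x = CGV.w ∨ x = CGV.w') →
      ∃ y : CGV, f x y = true ∧
        ((y = CGV.s ∨ y = CGV.t ∨ y = CGV.lf ∨ y = CGV.lf') ∨
          (fIn f y = 1 ∧ 1 ≤ fOut f y)) := by
    intro x hx
    obtain ⟨y, hy1, hy2⟩ := htc x (hnotin x hx)
    refine ⟨y, (hD _ _).1 hy1, ?_⟩
    rcases hy2 with hy2 | hy2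
    · left
      rcases hy2 with hy2 | hy2
      · rcases hy2 with rfl | rfl
        · exact Or.inr (Or.inr (Or.inl rfl))
        · exact Or.inr (Or.inr (Or.inr rfl))
      · rcases hy2 with rfl | rfl
        · exact Or.inl rfl
        · exact Or.inr (Or.inl rfl)
    · right; rw [← hIn, ← hOut]; exact hy2
  have := key _ _ _ _ _ _ _ _ h1 h2 h3 h4 h5 h6
  rcases this with ⟨c1, c2⟩ | ⟨c1, c2⟩
  · exact Or.inl ⟨(hD _ _).2 c1, (hD _ _).2 c2⟩
  · exact Or.inr ⟨(hD _ _).2 c1, (hD _ _).2 c2⟩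


end PaperFormalization
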